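/- Let m > 1, 0 < β < 1, b > 0 with m + β = 2, and let C > 0. Define ζ* = b(1-β)C^{β-1}(1 - (C/C*)^{2(1-β)}) where C* = (b(m-β)²/(2m(m+β)))^{1/(m-β)}. Then the function w(y,t) = C·max(y - ζ* t, 0)^{1/(1-β)} satisfies the PDE w_t = (w^m)_{yy} - b w^β at every point (y,t) with y ≠ ζ* t, t > 0. -/

import Mathlib

open Real Filter Set Topology

lemma aux_hasDerivAt (c q u v x : ℝ) (h : v * x + u ≠ 0) :
    HasDerivAt (fun s => c * (v * s + u) ^ q) (c * (q * (v * x + u) ^ (q - 1) * v)) x := by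
  have h1 : HasDerivAt (fun s : ℝ => v * s + u) v x := by
    simpa using ((hasDerivAt_id x).const_mul v).add_const u
  have h2 := (Real.hasDerivAt_rpow_const (p := q) (Or.inl h)).comp x h1
  simpa [mul_assoc] using h2.const_mul c

/-- The explicit traveling wave `w(y,t) = C (y - ζ* t)_+^{1/(1-β)}` satisfies
`w_t = (w^m)_{yy} - b w^β` at every point with `y ≠ ζ* t`, `t > 0`,
when `m + β = 2`. -/
theorem stmt0 (m β b C : ℝ) (hm : 1 < m) (hβ0 : 0 < β) (hβ1 : β < 1)
    (hb : 0 < b) (hC : 0 < C) (hmβ : m + β = 2)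
    (Cstar ζ : ℝ)
    (hCstar : Cstar = (b * (m - β) ^ 2 / (2 * m * (m + β))) ^ ((1 : ℝ) / (m - β)))
    (hζ : ζ = b * (1 - β) * C ^ (β - 1) * (1 - (C / Cstar) ^ (2 * (1 - β))))
    (w : ℝ → ℝ → ℝ)
    (hw : ∀ y t, w y t = C * (max (y - ζ * t) 0) ^ ((1 : ℝ) / (1 - β))) :
    ∀ y t : ℝ, 0 < t → y ≠ ζ * t →
      deriv (fun τ => w y τ) t =
        deriv (deriv (fun z => (w z t) ^ m)) y - b * (w y t) ^ β := by
  intro y t ht hy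
  have h1β : 0 < 1 - β := by linarith
  have hmβpos : 0 < m - β := by linarith
  have hmpos : 0 < m := by linarith
  set p : ℝ := (1 : ℝ) / (1 - β) with hp
  have hppos : 0 < p := by positivity
  rcases lt_or_gt_of_ne hy with hlt | hgt
  · -- zero region
    have hw0 : w y t = 0 := by
      rw [hw, max_eq_right (by linarith : y - ζ * t ≤ 0),
        Real.zero_rpow (ne_of_gt hppos), mul_zero]
    have hwz : ∀ᶠ z in 𝓝 y, w z t = 0 := by
      filter_upwards [Iio_mem_nhds hlt] with z hz
      rw [hw, max_eq_right (by linarith [mem_Iio.mp hz] : z - ζ * t ≤ 0),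
        Real.zero_rpow (ne_of_gt hppos), mul_zero]
    have hwt : ∀ᶠ τ in 𝓝 t, w y τ = 0 := by
      have hmem : {τ : ℝ | y < ζ * τ} ∈ 𝓝 t :=
        (isOpen_lt continuous_const (continuous_const.mul continuous_id)).mem_nhds hlt
      filter_upwards [hmem] with τ hτ
      rw [hw, max_eq_right (by have : y < ζ * τ := hτ; linarith : y - ζ * τ ≤ 0),
        Real.zero_rpow (ne_of_gt hppos), mul_zero]
    have hL : deriv (fun τ => w y τ) t = 0 := by
      have h0 : (fun τ => w y τ) =ᶠ[𝓝 t] fun _ => (0 : ℝ) := hwt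
      rw [h0.deriv_eq, deriv_const]
    have hR : deriv (deriv (fun z => (w z t) ^ m)) y = 0 := by
      have h0 : (fun z => (w z t) ^ m) =ᶠ[𝓝 y] fun _ => (0 : ℝ) := by
        filter_upwards [hwz] with z hz
        rw [hz, Real.zero_rpow (ne_of_gt hmpos)]
      rw [h0.deriv.deriv_eq]
      simp
    rw [hL, hR, hw0, Real.zero_rpow (ne_of_gt hβ0)]
    ring
  · -- positive region
    have hX : 0 < y - ζ * t := sub_pos.mpr hgt
    -- time derivative
    have hevt : (fun τ => w y τ) =ᶠ[𝓝 t] fun τ => C * ((-ζ) * τ + y) ^ p := by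
      have hmem : {τ : ℝ | ζ * τ < y} ∈ 𝓝 t :=
        (isOpen_lt (continuous_const.mul continuous_id) continuous_const).mem_nhds hgt
      filter_upwards [hmem] with τ hτ
      have hτ' : ζ * τ < y := hτ
      rw [hw, max_eq_left (by linarith : (0:ℝ) ≤ y - ζ * τ),
        show y - ζ * τ = (-ζ) * τ + y from by ring]
    have hXne : (-ζ) * t + y ≠ 0 := by
      have : (-ζ) * t + y = y - ζ * t := by ring
      rw [this]; exact ne_of_gt hX
    have hL : deriv (fun τ => w y τ) t = C * (p * (y - ζ * t) ^ (p - 1) * (-ζ)) := by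
      rw [hevt.deriv_eq, (aux_hasDerivAt C p y (-ζ) t hXne).deriv,
        show (-ζ) * t + y = y - ζ * t from by ring]
    -- spatial second derivative
    have hmemIoi : Ioi (ζ * t) ∈ 𝓝 y := Ioi_mem_nhds hgt
    have hevs : (fun z => (w z t) ^ m) =ᶠ[𝓝 y]
        fun z => (C ^ m) * ((1:ℝ) * z + (-(ζ * t))) ^ (p * m) := by
      filter_upwards [hmemIoi] with z hz
      have hz' : ζ * t < z := hz
      have hz0 : (0:ℝ) ≤ z - ζ * t := by linarith
      rw [hw, max_eq_left hz0, Real.mul_rpow hC.le (Real.rpow_nonneg hz0 _),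
        ← Real.rpow_mul hz0, show (1:ℝ) * z + (-(ζ * t)) = z - ζ * t from by ring]
    have hderiv_ev : deriv (fun z => (C ^ m) * ((1:ℝ) * z + (-(ζ * t))) ^ (p * m)) =ᶠ[𝓝 y]
        fun z => (C ^ m * (p * m)) * ((1:ℝ) * z + (-(ζ * t))) ^ (p * m - 1) := by
      filter_upwards [hmemIoi] with z hz
      have hz' : ζ * t < z := hz
      have hzne : (1:ℝ) * z + (-(ζ * t)) ≠ 0 := by
        have : (1:ℝ) * z + (-(ζ * t)) = z - ζ * t := by ring
        rw [this]; exact ne_of_gt (by linarith)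
      rw [(aux_hasDerivAt (C ^ m) (p * m) (-(ζ * t)) 1 z hzne).deriv]
      ring
    have hyne : (1:ℝ) * y + (-(ζ * t)) ≠ 0 := by
      have : (1:ℝ) * y + (-(ζ * t)) = y - ζ * t := by ring
      rw [this]; exact ne_of_gt hX
    have hR : deriv (deriv (fun z => (w z t) ^ m)) y
        = (C ^ m * (p * m)) * ((p * m - 1) * (y - ζ * t) ^ (p * m - 2) * 1) := by
      rw [hevs.deriv.deriv_eq, hderiv_ev.deriv_eq,
        (aux_hasDerivAt (C ^ m * (p * m)) (p * m - 1) (-(ζ * t)) 1 y hyne).deriv,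
        show (1:ℝ) * y + (-(ζ * t)) = y - ζ * t from by ring,
        show p * m - 1 - 1 = p * m - 2 from by ring]
    have hwyt : w y t = C * (y - ζ * t) ^ p := by
      rw [hw, max_eq_left hX.le]
    have hwβ : (C * (y - ζ * t) ^ p) ^ β = C ^ β * (y - ζ * t) ^ (p * β) := by
      rw [Real.mul_rpow hC.le (Real.rpow_nonneg hX.le _), ← Real.rpow_mul hX.le]
    -- exponent identities
    have e1 : p - 1 = p * β := by
      rw [hp]; field_simp; ring
    have e2 : p * m - 2 = p * β := by
      rw [hp]; field_simp; linarith
    -- coefficient identity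
    have hApos : 0 < b * (m - β) ^ 2 / (2 * m * (m + β)) :=
      div_pos (mul_pos hb (pow_pos hmβpos 2))
        (mul_pos (mul_pos two_pos hmpos) (by linarith))
    have hCs : Cstar ^ (m - β) = b * (m - β) ^ 2 / (2 * m * (m + β)) := by
      rw [hCstar, ← Real.rpow_mul hApos.le, one_div_mul_cancel (ne_of_gt hmβpos),
        Real.rpow_one]
    have hCspos : 0 < Cstar := by
      rw [hCstar]; exact Real.rpow_pos_of_pos hApos _
    have hq : (C / Cstar) ^ (2 * (1 - β))
        = C ^ (m - β) / (b * (m - β) ^ 2 / (2 * m * (m + β))) := by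
      rw [show 2 * (1 - β) = m - β from by linarith, Real.div_rpow hC.le hCspos.le, hCs]
    have e3 : C * C ^ (β - 1) = C ^ β := by
      nth_rewrite 1 [← Real.rpow_one C]
      rw [← Real.rpow_add hC]; norm_num
    have e4 : C ^ β * C ^ (m - β) = C ^ m := by
      rw [← Real.rpow_add hC]; ring_nf
    have hp1 : p * (1 - β) = 1 := by
      rw [hp]; field_simp
    have hbA : b / (b * (m - β) ^ 2 / (2 * m * (m + β))) = (p * m) * (p * m - 1) := by
      have hm2 : m = 2 - β := by linarith
      rw [hp, hm2]
      have h1 : (1:ℝ) - β ≠ 0 := ne_of_gt h1β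
      have h2 : (2:ℝ) - β - β ≠ 0 := by linarith
      have h3 : (2:ℝ) - β ≠ 0 := by linarith
      field_simp
      ring
    have key : C * p * ζ = b * C ^ β - C ^ m * ((p * m) * (p * m - 1)) := by
      rw [hζ, hq]
      calc C * p * (b * (1 - β) * C ^ (β - 1) *
              (1 - C ^ (m - β) / (b * (m - β) ^ 2 / (2 * m * (m + β)))))
          = (p * (1 - β)) * b * (C * C ^ (β - 1)) *
              (1 - C ^ (m - β) / (b * (m - β) ^ 2 / (2 * m * (m + β)))) := by ring
        _ = b * C ^ β *
              (1 - C ^ (m - β) / (b * (m - β) ^ 2 / (2 * m * (m + β)))) := by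
            rw [e3, hp1]; ring
        _ = b * C ^ β - (C ^ β * C ^ (m - β)) *
              (b / (b * (m - β) ^ 2 / (2 * m * (m + β)))) := by ring
        _ = b * C ^ β - C ^ m * ((p * m) * (p * m - 1)) := by rw [e4, hbA]
    rw [hL, hR, hwyt, hwβ, e1, e2]
    linear_combination (-((y - ζ * t) ^ (p * β))) * key
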